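/- Let Λ = (0,∞)³, Λ_a = {(x,y,z) ∈ Λ : x > z}, Λ_b = {(x,y,z) ∈ Λ : z > x}, and let Λ* = {(α,β,γ) ∈ ℝ³ : max(α,γ) < β < α + γ}, Λ*_a = {(α,β,γ) ∈ Λ* : α < γ}, Λ*_b = {(α,β,γ) ∈ Λ* : α > γ}. Define F̃ : Λ × Λ → ℝ⁶ by F̃(x,y,z,α,β,γ) = (x−z, z, y, α, α+γ, β) if x > z and F̃(x,y,z,α,β,γ) = (y, x, z−x, β, α+γ, γ) if z > x. Then F̃ maps Λ_a × Λ* bijectively onto Λ × Λ*_a, and F̃ maps Λ_b × Λ* bijectively onto Λ × Λ*_b. -/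

import Mathlib

open Set

/-- The positive cone `Λ = (0,∞)³`. -/
def posCone3 : Set (ℝ × ℝ × ℝ) := {v | 0 < v.1 ∧ 0 < v.2.1 ∧ 0 < v.2.2}

/-- `Λ_a = {(x,y,z) ∈ Λ : x > z}`. -/
def casConeA : Set (ℝ × ℝ × ℝ) := {v ∈ posCone3 | v.2.2 < v.1}
/-- `Λ_b = {(x,y,z) ∈ Λ : z > x}`. -/
def casConeB : Set (ℝ × ℝ × ℝ) := {v ∈ posCone3 | v.1 < v.2.2}

/-- `Λ* = {(α,β,γ) : max(α,γ) < β < α + γ}`. -/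
def casConeS : Set (ℝ × ℝ × ℝ) := {v | max v.1 v.2.2 < v.2.1 ∧ v.2.1 < v.1 + v.2.2}

/-- `Λ*_a = {(α,β,γ) ∈ Λ* : α < γ}`. -/
def casConeSA : Set (ℝ × ℝ × ℝ) := {v ∈ casConeS | v.1 < v.2.2}
/-- `Λ*_b = {(α,β,γ) ∈ Λ* : α > γ}`. -/
def casConeSB : Set (ℝ × ℝ × ℝ) := {v ∈ casConeS | v.2.2 < v.1}

/-- The natural extension map `F̃` of the Cassaigne algorithm. -/
noncomputable def casExt : (ℝ × ℝ × ℝ) × (ℝ × ℝ × ℝ) → (ℝ × ℝ × ℝ) × (ℝ × ℝ × ℝ)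
  | ((x, y, z), (a, b, c)) =>
    if z < x then ((x - z, z, y), (a, a + c, b))
    else ((y, x, z - x), (b, a + c, c))

/-- Inverse of the `a`-branch. -/
def casInvA : (ℝ × ℝ × ℝ) × (ℝ × ℝ × ℝ) → (ℝ × ℝ × ℝ) × (ℝ × ℝ × ℝ)
  | ((u, v, w), (p, q, r)) => ((u + v, w, v), (p, r, q - p))

/-- Inverse of the `b`-branch. -/
def casInvB : (ℝ × ℝ × ℝ) × (ℝ × ℝ × ℝ) → (ℝ × ℝ × ℝ) × (ℝ × ℝ × ℝ)
  | ((u, v, w), (p, q, r)) => ((v, u, w + v), (q - r, p, r))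

/-- The Cassaigne natural extension maps `Λ_a × Λ*` bijectively onto `Λ × Λ*_a`
and `Λ_b × Λ*` bijectively onto `Λ × Λ*_b`. -/
theorem stmt_10 :
    Set.BijOn casExt (casConeA ×ˢ casConeS) (posCone3 ×ˢ casConeSA) ∧
    Set.BijOn casExt (casConeB ×ˢ casConeS) (posCone3 ×ˢ casConeSB) := by
  constructor
  · have hmt : MapsTo casExt (casConeA ×ˢ casConeS) (posCone3 ×ˢ casConeSA) := by
      rintro ⟨⟨x, y, z⟩, ⟨a, b, c⟩⟩ hmem
      simp only [casConeA, posCone3, casConeS, mem_prod, mem_setOf_eq, mem_sep_iff,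
        max_lt_iff] at hmem
      obtain ⟨⟨⟨hx, hy, hz⟩, hzx⟩, ⟨hab, hcb⟩, hS2⟩ := hmem
      simp only [casExt, if_pos hzx, posCone3, casConeSA, casConeS, mem_prod, mem_setOf_eq,
        mem_sep_iff, max_lt_iff]
      refine ⟨⟨?_, ?_, ?_⟩, ⟨⟨?_, ?_⟩, ?_⟩, ?_⟩ <;> linarith
    have hmt' : MapsTo casInvA (posCone3 ×ˢ casConeSA) (casConeA ×ˢ casConeS) := by
      rintro ⟨⟨u, v, w⟩, ⟨p, q, r⟩⟩ hmem
      simp only [posCone3, casConeSA, casConeS, mem_prod, mem_setOf_eq, mem_sep_iff,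
        max_lt_iff] at hmem
      obtain ⟨⟨hu, hv, hw⟩, ⟨⟨hpq, hrq⟩, hqpr⟩, hpr⟩ := hmem
      simp only [casInvA, casConeA, posCone3, casConeS, mem_prod, mem_setOf_eq, mem_sep_iff,
        max_lt_iff]
      refine ⟨⟨⟨?_, ?_, ?_⟩, ?_⟩, ⟨?_, ?_⟩, ?_⟩ <;> linarith
    refine InvOn.bijOn ⟨?_, ?_⟩ hmt hmt'
    · rintro ⟨⟨x, y, z⟩, ⟨a, b, c⟩⟩ ⟨⟨_, hzx⟩, _⟩
      simp only [casExt, if_pos hzx, casInvA]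
      norm_num
    · rintro ⟨⟨u, v, w⟩, ⟨p, q, r⟩⟩ ⟨⟨hu, hv, hw⟩, _⟩
      have h : v < u + v := by simp only [posCone3, mem_setOf_eq] at hu hv hw; linarith
      simp only [casInvA, casExt, if_pos h]
      norm_num
      intro h'; exfalso; simp at hu; linarith
  · have hmt : MapsTo casExt (casConeB ×ˢ casConeS) (posCone3 ×ˢ casConeSB) := by
      rintro ⟨⟨x, y, z⟩, ⟨a, b, c⟩⟩ hmem
      simp only [casConeB, posCone3, casConeS, mem_prod, mem_setOf_eq, mem_sep_iff,
        max_lt_iff] at hmem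
      obtain ⟨⟨⟨hx, hy, hz⟩, hxz⟩, ⟨hab, hcb⟩, hS2⟩ := hmem
      have hnot : ¬ z < x := by linarith
      simp only [casExt, if_neg hnot, posCone3, casConeSB, casConeS, mem_prod, mem_setOf_eq,
        mem_sep_iff, max_lt_iff]
      refine ⟨⟨?_, ?_, ?_⟩, ⟨⟨?_, ?_⟩, ?_⟩, ?_⟩ <;> linarith
    have hmt' : MapsTo casInvB (posCone3 ×ˢ casConeSB) (casConeB ×ˢ casConeS) := by
      rintro ⟨⟨u, v, w⟩, ⟨p, q, r⟩⟩ hmem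
      simp only [posCone3, casConeSB, casConeS, mem_prod, mem_setOf_eq, mem_sep_iff,
        max_lt_iff] at hmem
      obtain ⟨⟨hu, hv, hw⟩, ⟨⟨hpq, hrq⟩, hqpr⟩, hrp⟩ := hmem
      simp only [casInvB, casConeB, posCone3, casConeS, mem_prod, mem_setOf_eq, mem_sep_iff,
        max_lt_iff]
      refine ⟨⟨⟨?_, ?_, ?_⟩, ?_⟩, ⟨?_, ?_⟩, ?_⟩ <;> linarith
    refine InvOn.bijOn ⟨?_, ?_⟩ hmt hmt'
    · rintro ⟨⟨x, y, z⟩, ⟨a, b, c⟩⟩ ⟨hmem, _⟩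
      simp only [casConeB, posCone3, mem_sep_iff, mem_setOf_eq] at hmem
      have hnot : ¬ z < x := by linarith [hmem.2]
      simp only [casExt, if_neg hnot, casInvB]
      norm_num
    · rintro ⟨⟨u, v, w⟩, ⟨p, q, r⟩⟩ ⟨hmem, _⟩
      simp only [posCone3, mem_setOf_eq] at hmem
      have hnot : ¬ w + v < v := by push_neg; linarith [hmem.1, hmem.2.1, hmem.2.2]
      simp only [casInvB, casExt, if_neg hnot]
      norm_num
      intro h'; exfalso; linarith [hmem.2.2]
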